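/- The planar relativistic collision map R̂ satisfies the collision invariant conditions: for all real α, β with q = α − β and all x, y ∈ ℝ³ with ⟨x+y, x+y⟩ + q² ≠ 0, setting (u, v) = R̂_{α,β}(x, y), one has u + v = x + y, ⟨u,u⟩ = ⟨x,x⟩, and ⟨v,v⟩ = ⟨y,y⟩ (conservation of relativistic energy, momentum, and the rest masses of the two particles). Moreover, if x and y are forward timelike (positive 0-th component and positive Minkowski square), then so are u and v. -/
import Mathlib


/-- The three-dimensional Minkowski bilinear form on `ℝ³`. -/
def mink3 (a b : ℝ × ℝ × ℝ) : ℝ :=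
  a.1 * b.1 - a.2.1 * b.2.1 - a.2.2 * b.2.2

/-- A vector of `ℝ³` is forward timelike if its 0-th component and its
Minkowski square are positive. -/
def ForwardTimelike3 (a : ℝ × ℝ × ℝ) : Prop := 0 < a.1 ∧ 0 < mink3 a a

/-- The coefficient `k̂(x,y,q)` of the planar relativistic collision map. -/
noncomputable def khat (x y : ℝ × ℝ × ℝ) (q : ℝ) : ℝ :=
  (mink3 x x - mink3 y y + q ^ 2) / (mink3 (x + y) (x + y) + q ^ 2)

/-- The vector `r̂(x,y,q)` of the planar relativistic collision map. -/
noncomputable def rhat (x y : ℝ × ℝ × ℝ) (q : ℝ) : ℝ × ℝ × ℝ :=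
  (mink3 (x + y) (x + y) + q ^ 2)⁻¹ •
    ((x.2.1 * y.2.2 - x.2.2 * y.2.1,
      x.1 * y.2.2 - x.2.2 * y.1,
      x.2.1 * y.1 - x.1 * y.2.1) : ℝ × ℝ × ℝ)

/-- The planar relativistic collision map `R̂_{α,β}`. -/
noncomputable def Rhat (α β : ℝ) (x y : ℝ × ℝ × ℝ) :
    (ℝ × ℝ × ℝ) × (ℝ × ℝ × ℝ) :=
  (khat x y (α - β) • x + (1 - khat y x (α - β)) • y +
      (2 * (α - β)) • rhat x y (α - β),
   (1 - khat x y (α - β)) • x + khat y x (α - β) • y -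
      (2 * (α - β)) • rhat x y (α - β))


lemma mink_pos_aux (x0 x1 x2 y0 y1 y2 : ℝ) (hx0 : 0 < x0) (hy0 : 0 < y0)
    (hx : x1*x1 + x2*x2 < x0*x0) (hy : y1*y1 + y2*y2 < y0*y0) :
    0 < x0*y0 - x1*y1 - x2*y2 := by
  nlinarith [sq_nonneg (x1*y2 - x2*y1), sq_nonneg (x1*y1 + x2*y2), mul_pos hx0 hy0,
    mul_pos (mul_pos hx0 hy0) (mul_pos hx0 hy0), sq_nonneg (x0*y0 - x1*y1 - x2*y2),
    sq_nonneg (x0*y0 + x1*y1 + x2*y2)]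

lemma key_sign_aux (u0 u1 u2 v0 v1 v2 : ℝ)
    (hu : u1*u1 + u2*u2 < u0*u0) (hv : v1*v1 + v2*v2 < v0*v0)
    (hdot : 0 < u0*v0 - u1*v1 - u2*v2) (hsum : 0 < u0 + v0) :
    0 < u0 ∧ 0 < v0 := by
  have hpos : 0 < u0 * v0 := by
    by_contra h'
    push_neg at h'
    nlinarith [sq_nonneg (u1*v2 - u2*v1), sq_nonneg (u1*v1 + u2*v2),
      sq_nonneg (u0*v0 + u1*v1 + u2*v2)]
  constructor <;> nlinarith

set_option maxHeartbeats 2000000 in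
/-- The planar relativistic collision map satisfies the collision invariant
conditions and preserves forward timelike vectors. -/
theorem planar_collision_invariants
    (α β : ℝ) (x y : ℝ × ℝ × ℝ)
    (h : mink3 (x + y) (x + y) + (α - β) ^ 2 ≠ 0)
    (u v : ℝ × ℝ × ℝ) (huv : (u, v) = Rhat α β x y) :
    u + v = x + y ∧
    mink3 u u = mink3 x x ∧
    mink3 v v = mink3 y y ∧
    (ForwardTimelike3 x → ForwardTimelike3 y →
      ForwardTimelike3 u ∧ ForwardTimelike3 v) := by
  rw [Prod.ext_iff] at huv
  obtain ⟨hu, hv⟩ := huv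
  obtain ⟨x0, x1, x2⟩ := x
  obtain ⟨y0, y1, y2⟩ := y
  simp only [Rhat, khat, rhat, mink3, Prod.mk_add_mk, Prod.smul_mk, smul_eq_mul,
    Prod.fst, Prod.snd, Prod.mk_sub_mk, div_eq_mul_inv] at hu hv h
  have e : (y0 + x0) * (y0 + x0) - (y1 + x1) * (y1 + x1) - (y2 + x2) * (y2 + x2) + (α - β) ^ 2
      = (x0 + y0) * (x0 + y0) - (x1 + y1) * (x1 + y1) - (x2 + y2) * (x2 + y2) + (α - β) ^ 2 := by
    ring
  rw [e] at hu hv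
  obtain ⟨u0, u1, u2⟩ := u
  obtain ⟨v0, v1, v2⟩ := v
  rw [Prod.ext_iff, Prod.ext_iff] at hu hv
  simp only [Prod.fst, Prod.snd] at hu hv
  obtain ⟨hu0, hu1, hu2⟩ := hu
  obtain ⟨hv0, hv1, hv2⟩ := hv
  set D : ℝ := (x0 + y0) * (x0 + y0) - (x1 + y1) * (x1 + y1) - (x2 + y2) * (x2 + y2) + (α - β) ^ 2
    with hDdef
  set q : ℝ := α - β with hq
  set A : ℝ := x0 * x0 - x1 * x1 - x2 * x2 - (y0 * y0 - y1 * y1 - y2 * y2) + q ^ 2 with hA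
  set B : ℝ := y0 * y0 - y1 * y1 - y2 * y2 - (x0 * x0 - x1 * x1 - x2 * x2) + q ^ 2 with hB
  have hu0' : u0 * D = A * x0 + (D - B) * y0 + 2 * q * (x1 * y2 - x2 * y1) := by
    rw [hu0]; field_simp
  have hu1' : u1 * D = A * x1 + (D - B) * y1 + 2 * q * (x0 * y2 - x2 * y0) := by
    rw [hu1]; field_simp
  have hu2' : u2 * D = A * x2 + (D - B) * y2 + 2 * q * (x1 * y0 - x0 * y1) := by
    rw [hu2]; field_simp
  have hv0' : v0 * D = (D - A) * x0 + B * y0 - 2 * q * (x1 * y2 - x2 * y1) := by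
    rw [hv0]; field_simp
  have hv1' : v1 * D = (D - A) * x1 + B * y1 - 2 * q * (x0 * y2 - x2 * y0) := by
    rw [hv1]; field_simp
  have hv2' : v2 * D = (D - A) * x2 + B * y2 - 2 * q * (x1 * y0 - x0 * y1) := by
    rw [hv2]; field_simp
  clear hu0 hu1 hu2 hv0 hv1 hv2
  have hU0 : u0 + v0 = x0 + y0 := by
    have hh : (u0 + v0) * D = (x0 + y0) * D := by rw [add_mul, hu0', hv0']; ring
    exact mul_right_cancel₀ h hh
  have hU1 : u1 + v1 = x1 + y1 := by
    have hh : (u1 + v1) * D = (x1 + y1) * D := by rw [add_mul, hu1', hv1']; ring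
    exact mul_right_cancel₀ h hh
  have hU2 : u2 + v2 = x2 + y2 := by
    have hh : (u2 + v2) * D = (x2 + y2) * D := by rw [add_mul, hu2', hv2']; ring
    exact mul_right_cancel₀ h hh
  have hDD : D * D ≠ 0 := mul_ne_zero h h
  have hmu : u0 * u0 - u1 * u1 - u2 * u2 = x0 * x0 - x1 * x1 - x2 * x2 := by
    refine mul_right_cancel₀ hDD ?_
    have e1 : (u0 * u0 - u1 * u1 - u2 * u2) * (D * D)
        = (u0 * D) * (u0 * D) - (u1 * D) * (u1 * D) - (u2 * D) * (u2 * D) := by ring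
    rw [e1, hu0', hu1', hu2', hA, hB, hDdef]
    ring
  have hmv : v0 * v0 - v1 * v1 - v2 * v2 = y0 * y0 - y1 * y1 - y2 * y2 := by
    refine mul_right_cancel₀ hDD ?_
    have e1 : (v0 * v0 - v1 * v1 - v2 * v2) * (D * D)
        = (v0 * D) * (v0 * D) - (v1 * D) * (v1 * D) - (v2 * D) * (v2 * D) := by ring
    rw [e1, hv0', hv1', hv2', hA, hB, hDdef]
    ring
  refine ⟨by rw [Prod.ext_iff, Prod.ext_iff]; exact ⟨hU0, hU1, hU2⟩, hmu, hmv, ?_⟩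
  rintro ⟨hx0, hxm⟩ ⟨hy0, hym⟩
  simp only [ForwardTimelike3, mink3, Prod.fst, Prod.snd] at hxm hym ⊢
  simp only [Prod.fst] at hx0 hy0
  have hdotxy : 0 < x0 * y0 - x1 * y1 - x2 * y2 :=
    mink_pos_aux x0 x1 x2 y0 y1 y2 hx0 hy0 (by nlinarith) (by nlinarith)
  have hdot : u0 * v0 - u1 * v1 - u2 * v2 = x0 * y0 - x1 * y1 - x2 * y2 := by
    linear_combination ((u0 + v0 + x0 + y0) * hU0 - (u1 + v1 + x1 + y1) * hU1
      - (u2 + v2 + x2 + y2) * hU2 - hmu - hmv) / 2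
  have hk := key_sign_aux u0 u1 u2 v0 v1 v2 (by nlinarith) (by nlinarith)
    (by rw [hdot]; exact hdotxy) (by rw [hU0]; positivity)
  exact ⟨⟨hk.1, by linarith⟩, ⟨hk.2, by linarith⟩⟩
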